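/- Assume η ≠ 1/2, and let a and b be primitive axes of Jordan type η in A with a ≠ b and a·b ≠ 0. Then the element c = τ(a)(b) satisfies c = τ(b)(a), c is again a primitive axis of Jordan type η in A, and a·b = (η/2) • (a + b − c). -/

import Mathlib

set_option linter.unusedSectionVars false


/-- The `lam`-eigenspace of the left-multiplication operator by `x`. -/
def eigSp (F : Type*) {A : Type*} [Field F] [NonUnitalNonAssocCommRing A] [Module F A]
    [SMulCommClass F A A] (x : A) (lam : F) : Submodule F A where
  carrier := {y | x * y = lam • y}
  add_mem' := by
    intro y z hy hz
    simp only [Set.mem_setOf_eq] at *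
    rw [mul_add, hy, hz, smul_add]
  zero_mem' := by simp
  smul_mem' := by
    intro c y hy
    simp only [Set.mem_setOf_eq] at *
    rw [mul_smul_comm, hy, smul_smul, smul_smul, mul_comm]

variable {F A : Type*} [Field F] [NonUnitalNonAssocCommRing A] [Module F A]
  [SMulCommClass F A A] [IsScalarTower F A A]

/-- `a` is a primitive axis of Jordan type `η`:  it is an idempotent, `A` is the internal
direct sum of the `1`-, `0`- and `η`-eigenspaces of `ad_a` with `A_1(a) = F • a` (expressed
as unique decomposition `x = φ • a + α + γ`), `A_0(a)` is a subalgebra, and the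
`ℤ/2`-grading fusion rules hold for `A₊(a) = A_1(a) + A_0(a)`, `A₋(a) = A_η(a)`. -/
structure IsPrimitiveAxis (η : F) (a : A) : Prop where
  idem : a * a = a
  prim : eigSp F a (1 : F) = Submodule.span F {a}
  decomp : ∀ x : A, ∃! t : F × A × A,
    t.2.1 ∈ eigSp F a (0 : F) ∧ t.2.2 ∈ eigSp F a η ∧ x = t.1 • a + t.2.1 + t.2.2
  zz : ∀ y ∈ eigSp F a (0 : F), ∀ z ∈ eigSp F a (0 : F), y * z ∈ eigSp F a (0 : F)
  pp : ∀ y ∈ eigSp F a (1 : F) ⊔ eigSp F a (0 : F),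
       ∀ z ∈ eigSp F a (1 : F) ⊔ eigSp F a (0 : F),
         y * z ∈ eigSp F a (1 : F) ⊔ eigSp F a (0 : F)
  pm : ∀ y ∈ eigSp F a (1 : F) ⊔ eigSp F a (0 : F), ∀ z ∈ eigSp F a η, y * z ∈ eigSp F a η
  mm : ∀ y ∈ eigSp F a η, ∀ z ∈ eigSp F a η,
         y * z ∈ eigSp F a (1 : F) ⊔ eigSp F a (0 : F)

/-- `τ` is the Miyamoto map of the axis `a`:  the `F`-linear map which is the identity on
`A_1(a) ⊔ A_0(a)` and `-1` on `A_η(a)`. -/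
def IsMiyamotoMap (η : F) (a : A) (τ : A →ₗ[F] A) : Prop :=
  (∀ y ∈ eigSp F a (1 : F) ⊔ eigSp F a (0 : F), τ y = y) ∧
  (∀ y ∈ eigSp F a η, τ y = -y)

-- ==== auxiliary lemmas ====

lemma mem_eigSp {x y : A} {lam : F} : y ∈ eigSp F x lam ↔ x * y = lam • y := Iff.rfl

lemma smul_cancel {c : F} (hc : c ≠ 0) {x y : A} (h : c • x = c • y) : x = y := by
  have h' := congrArg (c⁻¹ • ·) h
  simpa [smul_smul, inv_mul_cancel₀ hc] using h'

lemma self_mem_eig_one {η : F} {a : A} (ha : IsPrimitiveAxis η a) :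
    a ∈ eigSp F a 1 := by
  rw [mem_eigSp, ha.idem, one_smul]

lemma decomp_unique {η : F} {a : A} (ha : IsPrimitiveAxis η a) {s t : F} {α γ β δ : A}
    (hα : α ∈ eigSp F a 0) (hγ : γ ∈ eigSp F a η)
    (hβ : β ∈ eigSp F a 0) (hδ : δ ∈ eigSp F a η)
    (h : s • a + α + γ = t • a + β + δ) : s = t ∧ α = β ∧ γ = δ := by
  obtain ⟨u, _, hu⟩ := ha.decomp (s • a + α + γ)
  have h1 := hu (s, α, γ) ⟨hα, hγ, rfl⟩
  have h2 := hu (t, β, δ) ⟨hβ, hδ, h⟩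
  have h3 := h1.trans h2.symm
  simp only [Prod.ext_iff] at h3
  exact ⟨h3.1, h3.2.1, h3.2.2⟩

lemma sup_split {η : F} {a : A} (ha : IsPrimitiveAxis η a) {x : A}
    (hx : x ∈ eigSp F a 1 ⊔ eigSp F a 0) :
    ∃ μ : F, ∃ δ ∈ eigSp F a 0, x = μ • a + δ := by
  rw [Submodule.mem_sup] at hx
  obtain ⟨y, hy, z, hz, rfl⟩ := hx
  rw [ha.prim, Submodule.mem_span_singleton] at hy
  obtain ⟨μ, rfl⟩ := hy
  exact ⟨μ, z, hz, rfl⟩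

lemma tau_apply {η : F} {a : A} (ha : IsPrimitiveAxis η a) {τ : A →ₗ[F] A}
    (hτ : IsMiyamotoMap η a τ) {t : F} {α γ : A}
    (hα : α ∈ eigSp F a 0) (hγ : γ ∈ eigSp F a η) :
    τ (t • a + α + γ) = t • a + α - γ := by
  have hmem : t • a + α ∈ eigSp F a 1 ⊔ eigSp F a 0 :=
    add_mem (Submodule.mem_sup_left (Submodule.smul_mem _ _ (self_mem_eig_one ha)))
      (Submodule.mem_sup_right hα)
  rw [map_add, hτ.1 _ hmem, hτ.2 _ hγ, ← sub_eq_add_neg]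

lemma tau_parts {η : F} {a : A} (ha : IsPrimitiveAxis η a) {τ : A →ₗ[F] A}
    (hτ : IsMiyamotoMap η a τ) (x : A) :
    ∃ p m, p ∈ eigSp F a 1 ⊔ eigSp F a 0 ∧ m ∈ eigSp F a η ∧ x = p + m ∧ τ x = p - m := by
  obtain ⟨⟨t, α, γ⟩, ⟨hα, hγ, hx⟩, -⟩ := ha.decomp x
  refine ⟨t • a + α, γ, ?_, hγ, hx, by rw [hx]; exact tau_apply ha hτ hα hγ⟩
  exact add_mem (Submodule.mem_sup_left (Submodule.smul_mem _ _ (self_mem_eig_one ha)))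
    (Submodule.mem_sup_right hα)

lemma tau_mul {η : F} {a : A} (ha : IsPrimitiveAxis η a) {τ : A →ₗ[F] A}
    (hτ : IsMiyamotoMap η a τ) (x y : A) : τ (x * y) = τ x * τ y := by
  obtain ⟨p, m, hp, hm, hx, hτx⟩ := tau_parts ha hτ x
  obtain ⟨q, n, hq, hn, hy, hτy⟩ := tau_parts ha hτ y
  have h1 : x * y = (p * q + m * n) + (p * n + m * q) := by
    rw [hx, hy, add_mul, mul_add, mul_add]; abel
  have hsup : p * q + m * n ∈ eigSp F a 1 ⊔ eigSp F a 0 :=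
    add_mem (ha.pp p hp q hq) (ha.mm m hm n hn)
  have hmq : m * q ∈ eigSp F a η := by rw [mul_comm]; exact ha.pm q hq m hm
  have hmem : p * n + m * q ∈ eigSp F a η := add_mem (ha.pm p hp n hn) hmq
  rw [h1, map_add, hτ.1 _ hsup, hτ.2 _ hmem, hτx, hτy, sub_mul, mul_sub, mul_sub]
  abel

lemma tau_invol {η : F} {a : A} (ha : IsPrimitiveAxis η a) {τ : A →ₗ[F] A}
    (hτ : IsMiyamotoMap η a τ) (x : A) : τ (τ x) = x := by
  obtain ⟨p, m, hp, hm, hx, hτx⟩ := tau_parts ha hτ x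
  rw [hτx, map_sub, hτ.1 _ hp, hτ.2 _ hm, hx, sub_neg_eq_add]

lemma mem_eig_tau {η : F} {a : A} (ha : IsPrimitiveAxis η a) {τ : A →ₗ[F] A}
    (hτ : IsMiyamotoMap η a τ) (x : A) (lam : F) (y : A) :
    y ∈ eigSp F (τ x) lam ↔ τ y ∈ eigSp F x lam := by
  rw [mem_eigSp, mem_eigSp]
  constructor
  · intro h
    calc x * τ y = τ (τ x) * τ y := by rw [tau_invol ha hτ]
      _ = τ (τ x * y) := (tau_mul ha hτ _ _).symm
      _ = τ (lam • y) := by rw [h]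
      _ = lam • τ y := map_smul _ _ _
  · intro h
    calc τ x * y = τ x * τ (τ y) := by rw [tau_invol ha hτ]
      _ = τ (x * τ y) := (tau_mul ha hτ _ _).symm
      _ = τ (lam • τ y) := by rw [h]
      _ = lam • τ (τ y) := map_smul _ _ _
      _ = lam • y := by rw [tau_invol ha hτ]

lemma mem_map_tau {η : F} {a : A} (ha : IsPrimitiveAxis η a) {τ : A →ₗ[F] A}
    (hτ : IsMiyamotoMap η a τ) (S : Submodule F A) (y : A) :
    y ∈ S.map τ ↔ τ y ∈ S := by
  constructor
  · rintro ⟨z, hz, rfl⟩; rwa [tau_invol ha hτ]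
  · intro h; exact ⟨τ y, h, tau_invol ha hτ y⟩

lemma eig_tau_map {η : F} {a : A} (ha : IsPrimitiveAxis η a) {τ : A →ₗ[F] A}
    (hτ : IsMiyamotoMap η a τ) (x : A) (lam : F) :
    eigSp F (τ x) lam = (eigSp F x lam).map τ := by
  ext y
  rw [mem_eig_tau ha hτ, mem_map_tau ha hτ]

lemma axis_tau {η : F} {a b : A} (ha : IsPrimitiveAxis η a) (hb : IsPrimitiveAxis η b)
    {τ : A →ₗ[F] A} (hτ : IsMiyamotoMap η a τ) : IsPrimitiveAxis η (τ b) := by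
  have tinv := tau_invol ha hτ
  have tmul := tau_mul ha hτ
  have hsup : ∀ y : A, (y ∈ eigSp F (τ b) 1 ⊔ eigSp F (τ b) 0) ↔
      τ y ∈ eigSp F b 1 ⊔ eigSp F b 0 := by
    intro y
    rw [eig_tau_map ha hτ, eig_tau_map ha hτ, ← Submodule.map_sup]
    exact mem_map_tau ha hτ _ y
  constructor
  · rw [← tmul, hb.idem]
  · ext y
    rw [mem_eig_tau ha hτ, hb.prim, Submodule.mem_span_singleton,
      Submodule.mem_span_singleton]
    constructor
    · rintro ⟨c, hc⟩
      exact ⟨c, by rw [← map_smul, hc, tinv]⟩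
    · rintro ⟨c, rfl⟩
      exact ⟨c, by rw [← map_smul, tinv]⟩
  · intro x
    obtain ⟨⟨t, α, γ⟩, ⟨hα, hγ, hx⟩, huniq⟩ := hb.decomp (τ x)
    refine ⟨(t, τ α, τ γ), ⟨?_, ?_, ?_⟩, ?_⟩
    · rw [mem_eig_tau ha hτ, tinv]; exact hα
    · rw [mem_eig_tau ha hτ, tinv]; exact hγ
    · have h := congrArg τ hx
      rw [tinv, map_add, map_add, map_smul] at h
      exact h
    · rintro ⟨s, β, δ⟩ ⟨hβ, hδ, hxd⟩
      have h1 : τ x = s • b + τ β + τ δ := by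
        have h := congrArg τ hxd
        rwa [map_add, map_add, map_smul, tinv] at h
      have hβ' : τ β ∈ eigSp F b 0 := (mem_eig_tau ha hτ b 0 β).mp hβ
      have hδ' : τ δ ∈ eigSp F b η := (mem_eig_tau ha hτ b η δ).mp hδ
      have h2 := huniq (s, τ β, τ δ) ⟨hβ', hδ', h1⟩
      simp only [Prod.ext_iff] at h2 ⊢
      refine ⟨h2.1, ?_, ?_⟩
      · rw [← h2.2.1, tinv]
      · rw [← h2.2.2, tinv]
  · intro y hy z hz
    rw [mem_eig_tau ha hτ] at hy hz ⊢
    rw [tmul]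
    exact hb.zz _ hy _ hz
  · intro y hy z hz
    rw [hsup] at hy hz ⊢
    rw [tmul]
    exact hb.pp _ hy _ hz
  · intro y hy z hz
    rw [hsup] at hy
    rw [mem_eig_tau ha hτ] at hz ⊢
    rw [tmul]
    exact hb.pm _ hy _ hz
  · intro y hy z hz
    rw [mem_eig_tau ha hτ] at hy hz
    rw [hsup, tmul]
    exact hb.mm _ hy _ hz

lemma core_eqs {η : F} (h2 : (2:F) ≠ 0) (hη1 : η ≠ 1) {a b : A}
    (ha : IsPrimitiveAxis η a) (hb : IsPrimitiveAxis η b)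
    {l l' : F} {α γ α' γ' : A}
    (hα : α ∈ eigSp F a 0) (hγ : γ ∈ eigSp F a η) (hbe : b = l • a + α + γ)
    (hα' : α' ∈ eigSp F b 0) (hγ' : γ' ∈ eigSp F b η) (hae : a = l' • b + α' + γ') :
    a * b = l • a + η • γ ∧
    b * (a * b) = (l' * (1 - η)) • b + η • (a * b) ∧
    l * l = l * l' ∧
    ((l * η + η / 2) - (l' * (1 - η) + η * η)) • γ = 0 := by
  have haα : a * α = 0 := by have h := mem_eigSp.mp hα; rwa [zero_smul] at h
  have haγ : a * γ = η • γ := hγ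
  have hbγ' : b * γ' = η • γ' := hγ'
  have hab1 : a * b = l • a + η • γ := by
    conv_lhs => rw [hbe]
    rw [mul_add, mul_add, mul_smul_comm, ha.idem, haα, haγ, add_zero]
  have hba1 : b * a = l' • b + η • γ' := by
    conv_lhs => rw [hae]
    rw [mul_add, mul_add, mul_smul_comm, hb.idem,
      (by have h := mem_eigSp.mp hα'; rwa [zero_smul] at h : b * α' = 0), hbγ', add_zero]
  obtain ⟨μ, δ, hδ, hγγ⟩ := sup_split ha (ha.mm γ hγ γ hγ)
  have p1 : (l • a) * (l • a) = (l*l) • a := by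
    rw [smul_mul_assoc, mul_smul_comm, ha.idem, smul_smul]
  have p2 : (l • a) * α = 0 := by rw [smul_mul_assoc, haα, smul_zero]
  have p3 : α * (l • a) = 0 := by rw [mul_comm]; exact p2
  have p4 : (l • a) * γ = (l*η) • γ := by rw [smul_mul_assoc, haγ, smul_smul]
  have p5 : γ * (l • a) = (l*η) • γ := by rw [mul_comm]; exact p4
  have p6 : γ * α = α * γ := mul_comm γ α
  have hbb : b * b = (l*l + μ) • a + (α*α + δ) + ((2*(l*η)) • γ + (2:F) • (α*γ)) := by
    conv_lhs => rw [hbe]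
    simp only [add_mul, mul_add, p1, p2, p3, p4, p5, p6, hγγ]
    module
  have hbbb : (l*l + μ) • a + (α*α + δ) + ((2*(l*η)) • γ + (2:F) • (α*γ))
      = l • a + α + γ := by rw [← hbb, hb.idem]; exact hbe
  have hαsup : α ∈ eigSp F a 1 ⊔ eigSp F a 0 := Submodule.mem_sup_right hα
  have hαγm : α*γ ∈ eigSp F a η := ha.pm α hαsup γ hγ
  obtain ⟨hμeq, hαeq, hγeq⟩ := decomp_unique ha
    (add_mem (ha.zz α hα α hα) hδ)
    (add_mem (Submodule.smul_mem _ _ hγ) (Submodule.smul_mem _ _ hαγm)) hα hγ hbbb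
  have hαγ : α * γ = ((1 - 2*(l*η))/2) • γ := by
    apply smul_cancel h2
    have h' : (2:F) • (α*γ) = (1 - 2*(l*η)) • γ := by
      linear_combination (norm := module) hγeq
    rw [h', smul_smul]
    match_scalars
    field_simp
  have hbγ : b * γ = μ • a + δ + ((l*η) + (1 - 2*(l*η))/2) • γ := by
    conv_lhs => rw [hbe]
    simp only [add_mul, p4, p5, hαγ, hγγ]
    module
  have hbab1 : b * (a * b) = (l*l + η*μ) • a + η • δ + (l*η + η/2) • γ := by
    rw [hab1, mul_add]
    simp only [mul_smul_comm]
    rw [mul_comm b a, hab1, hbγ]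
    match_scalars <;> field_simp <;> ring
  have hbab2 : b * (a * b) = (l' * (1 - η)) • b + η • (a * b) := by
    conv_lhs => rw [mul_comm a b, hba1]
    rw [mul_add]
    simp only [mul_smul_comm]
    rw [hb.idem, hbγ']
    conv_rhs => rw [mul_comm a b, hba1]
    module
  have hkey : (l*l + η*μ) • a + (η • δ) + ((l*η + η/2) • γ)
      = (l'*(1-η)*l + η*l) • a + ((l'*(1-η)) • α) + ((l'*(1-η) + η*η) • γ) := by
    have h := hbab1.symm.trans hbab2
    rw [hab1, hbe] at h
    linear_combination (norm := module) h
  obtain ⟨hC1, hC0, hCη⟩ := decomp_unique ha (Submodule.smul_mem _ _ hδ)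
    (Submodule.smul_mem _ _ hγ) (Submodule.smul_mem _ _ hα) (Submodule.smul_mem _ _ hγ) hkey
  have hll : (l*l)*(1-η) = (l*l')*(1-η) := by linear_combination hC1 - η*hμeq
  refine ⟨hab1, hbab2, mul_right_cancel₀ (sub_ne_zero.mpr (Ne.symm hη1)) hll, ?_⟩
  rw [sub_smul, hCη, sub_self]

/-- for `η ≠ 1/2` and distinct non-orthogonal primitive axes `a`, `b`,
`c = τ(a)(b)` satisfies `c = τ(b)(a)`, `c` is a primitive axis, and
`a·b = (η/2) • (a + b − c)`. -/
theorem third_axis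
    (h2 : (2 : F) ≠ 0) (η : F) (hη0 : η ≠ 0) (hη1 : η ≠ 1) (hη2 : η ≠ 1 / 2)
    (a b : A) (ha : IsPrimitiveAxis η a) (hb : IsPrimitiveAxis η b)
    (hne : a ≠ b) (hab : a * b ≠ 0)
    (τa τb : A →ₗ[F] A)
    (hτa : IsMiyamotoMap η a τa) (hτb : IsMiyamotoMap η b τb) :
    τa b = τb a ∧ IsPrimitiveAxis η (τa b) ∧
      a * b = (η / 2) • (a + b - τa b) := by
  obtain ⟨⟨l, α, γ⟩, ⟨hα, hγ, hbe⟩, -⟩ := ha.decomp b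
  obtain ⟨⟨l', α', γ'⟩, ⟨hα', hγ', hae⟩, -⟩ := hb.decomp a
  obtain ⟨hab1, hbab2, hll, hγ0⟩ := core_eqs h2 hη1 ha hb hα hγ hbe hα' hγ' hae
  obtain ⟨hba1, -, hll', -⟩ := core_eqs h2 hη1 hb ha hα' hγ' hae hα hγ hbe
  have ha0 : a ≠ 0 := fun h => hab (by rw [h, zero_mul])
  have hb0 : b ≠ 0 := fun h => hab (by rw [h, mul_zero])
  have h1η : (1:F) - η ≠ 0 := sub_ne_zero.mpr (Ne.symm hη1)
  have h21 : 2*η - 1 ≠ 0 := fun h => hη2 (by rw [eq_div_iff h2]; linear_combination h)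
  have hγne : γ ≠ 0 := by
    intro hγz
    have hab2 : a * b = l • a := by rw [hab1, hγz, smul_zero, add_zero]
    have hl0 : l ≠ 0 := by
      intro h; exact hab (by rw [hab2, h, zero_smul])
    have hl'l : l' = l := (mul_left_cancel₀ hl0 hll).symm
    have e1 : b * (a * b) = (l*l) • a := by
      rw [hab2, mul_smul_comm, mul_comm b a, hab2, smul_smul]
    have e2 : b * (a * b) = (l*(1-η)) • b + (η*l) • a := by
      rw [hbab2, hl'l, hab2, smul_smul]
    have e3 : (l*(1-η)) • b = (l*l - η*l) • a := by
      linear_combination (norm := module) -(e1.symm.trans e2)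
    have hc : l*(1-η) ≠ 0 := mul_ne_zero hl0 h1η
    have hk : b = ((l*(1-η))⁻¹ * (l*l - η*l)) • a := by
      apply smul_cancel hc (x := b)
      rw [e3, smul_smul, ← mul_assoc, mul_inv_cancel₀ hc, one_mul]
    set k := (l*(1-η))⁻¹ * (l*l - η*l) with hkdef
    have hb2 : (k*k) • a = k • a := by
      have h := hb.idem
      rw [hk, smul_mul_assoc, mul_smul_comm, ha.idem, smul_smul] at h
      exact h
    have hkk : k*k - k = 0 := by
      by_contra hne'
      exact ha0 (smul_cancel hne' (by rw [sub_smul, hb2, sub_self, smul_zero]))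
    rcases mul_eq_zero.mp (show k*(k-1) = 0 by linear_combination hkk) with h' | h'
    · exact hb0 (by rw [hk, h', zero_smul])
    · exact hne ((by rw [hk, sub_eq_zero.mp h', one_smul] : b = a)).symm
  have hsc : l*η + η/2 = l'*(1-η) + η*η := by
    by_contra hne'
    exact hγne (smul_cancel (sub_ne_zero.mpr hne') (by rw [hγ0, smul_zero]))
  have hl0 : l ≠ 0 := by
    intro h
    have hl'0 : l' = 0 := by
      have h3 := hll'
      rw [h, mul_zero] at h3
      exact mul_self_eq_zero.mp h3
    rw [h, hl'0] at hsc
    have hq : η/2 = η*η := by linear_combination hsc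
    rw [div_eq_iff h2] at hq
    have h1 : 1 = η*2 := mul_left_cancel₀ hη0 (by linear_combination hq)
    apply hη2
    rw [eq_div_iff h2]
    linear_combination -h1
  have hl'eq : l' = l := (mul_left_cancel₀ hl0 hll).symm
  have hl : l = η/2 := by
    rw [hl'eq] at hsc
    have hq : η/2 = l*(1-η) + η*η - l*η := by linear_combination hsc
    rw [div_eq_iff h2] at hq
    rcases mul_eq_zero.mp (show (2*η - 1)*(2*l - η) = 0 by linear_combination hq) with h' | h'
    · exact absurd h' h21
    · rw [eq_div_iff h2]; linear_combination h'
  have hl' : l' = η/2 := hl'eq.trans hl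
  have hstar : l • a + η • γ = l' • b + η • γ' := by
    rw [← hab1, ← hba1, mul_comm]
  have hτab : τa b = l • a + α - γ := by
    conv_lhs => rw [hbe]
    exact tau_apply ha hτa hα hγ
  have hτba : τb a = l' • b + α' - γ' := by
    conv_lhs => rw [hae]
    exact tau_apply hb hτb hα' hγ'
  have e1 : τa b = b - (2:F) • γ := by
    rw [hτab]
    conv_rhs => rw [hbe]
    module
  have e2 : τb a = a - (2:F) • γ' := by
    rw [hτba]
    conv_rhs => rw [hae]
    module
  have hγ'eq : γ' = (2:F)⁻¹ • a + γ - (2:F)⁻¹ • b := by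
    apply smul_cancel hη0
    have h' : η • γ' = (η/2) • a + η • γ - (η/2) • b := by
      rw [hl, hl'] at hstar
      linear_combination (norm := module) -hstar
    rw [h']
    match_scalars <;> field_simp
  refine ⟨?_, axis_tau ha hb hτa, ?_⟩
  · rw [e1, e2, hγ'eq]
    match_scalars <;> field_simp <;> ring
  · rw [hab1, e1, hl]
    match_scalars <;> field_simp <;> ring
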